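/- Fix complex numbers q ≠ 1, α_0, α_1, α_2, α_3 and t. For ε ≠ 0 let M_ε be the 3×3 matrix obtained from the coefficient matrix (A_0 + tA_1)/(1−t) of the linear q-difference system of the q-Garnier system of fourth order by substituting α_0 := ε, α_5 := α_0/ε and t := εt, and let Λ_ε = diag(1, −ε(1−q), −ε(1−q)). Then the entrywise limit lim_{ε→0} Λ_ε·M_ε·Λ_ε^{-1} exists and equals B_0 + tB_1, where B_0 = [[1, 0, 0], [(1−q)α_0, α_0, 0], [(1−q)α_0, α_0(1−α_1), α_0α_1α_2]] and B_1 = [[−α_0, −α_0(1−α_1)/(1−q), −α_0α_1α_2(1−α_3)/(1−q)], [0,0,0], [0,0,0]]. (Thus the linear q-difference system of the degenerate q-Garnier system attached to the quiver Q_11 is obtained from that of the q-Garnier system by this confluence procedure.) -/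

import Mathlib

open Filter Topology Matrix

noncomputable section

/-- The matrix `A₀` of the linear `q`-difference system of the `q`-Garnier system of
fourth order. -/
def A0m (a0 a1 a2 a5 : ℂ) : Matrix (Fin 3) (Fin 3) ℂ :=
  !![1, 0, 0;
     1 - a5, a0 * a5, 0;
     1 - a5, a0 * a5 * (1 - a1), a0 * a1 * a2 * a5]

/-- The matrix `A₁` of the linear `q`-difference system of the `q`-Garnier system of
fourth order. -/
def A1m (a0 a1 a2 a3 a5 : ℂ) : Matrix (Fin 3) (Fin 3) ℂ :=
  !![-a5, a0 * a5 * (1 - a1), a0 * a1 * a2 * a5 * (1 - a3);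
     0, -(a0 * a1 * a5), a0 * a1 * a2 * a5 * (1 - a3);
     0, 0, -(a0 * a1 * a2 * a3 * a5)]

/-- The matrix `B₀` of the linear `q`-difference system attached to the quiver `Q_11`. -/
def B0m (q a0 a1 a2 : ℂ) : Matrix (Fin 3) (Fin 3) ℂ :=
  !![1, 0, 0;
     (1 - q) * a0, a0, 0;
     (1 - q) * a0, a0 * (1 - a1), a0 * a1 * a2]

/-- The matrix `B₁` of the linear `q`-difference system attached to the quiver `Q_11`. -/
def B1m (q a0 a1 a2 a3 : ℂ) : Matrix (Fin 3) (Fin 3) ℂ :=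
  !![-a0, -(a0 * (1 - a1) / (1 - q)), -(a0 * a1 * a2 * (1 - a3) / (1 - q));
     0, 0, 0;
     0, 0, 0]

set_option maxHeartbeats 2000000 in
/-- Substituting `α_0 := ε`, `α_5 := α_0/ε`, `t := εt` into the
coefficient matrix `(A₀ + tA₁)/(1-t)` of the linear `q`-difference system of the
`q`-Garnier system and conjugating by `Λ_ε = diag(1, -ε(1-q), -ε(1-q))`, the entrywise
limit as `ε → 0` exists and equals `B₀ + tB₁`, the coefficient matrix attached to the
quiver `Q_11`. -/
theorem confluence_linear_system_Q12_to_Q11 (q a0 a1 a2 a3 t : ℂ) (hq : q ≠ 1) :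
    Tendsto
      (fun ε : ℂ =>
        Matrix.diagonal ![1, -(ε * (1 - q)), -(ε * (1 - q))] *
          ((1 - ε * t)⁻¹ • (A0m ε a1 a2 (a0 / ε) + (ε * t) • A1m ε a1 a2 a3 (a0 / ε))) *
          (Matrix.diagonal ![1, -(ε * (1 - q)), -(ε * (1 - q))])⁻¹)
      (𝓝[≠] (0 : ℂ))
      (𝓝 (B0m q a0 a1 a2 + t • B1m q a0 a1 a2 a3)) := by
  have hq' : (1 : ℂ) - q ≠ 0 := sub_ne_zero.mpr (Ne.symm hq)
  set H : ℂ → Matrix (Fin 3) (Fin 3) ℂ := fun ε =>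
    !![1 - a0 * t, -(t * a0 * (1 - a1) / (1 - q)), -(t * a0 * a1 * a2 * (1 - a3) / (1 - q));
       (1 - q) * (a0 - ε), a0 * (1 - ε * t * a1), ε * t * a0 * a1 * a2 * (1 - a3);
       (1 - q) * (a0 - ε), a0 * (1 - a1), a0 * a1 * a2 * (1 - ε * t * a3)] with hH
  set G : ℂ → Matrix (Fin 3) (Fin 3) ℂ := fun ε => (1 - ε * t)⁻¹ • H ε with hG
  have hGcont : ContinuousAt G 0 := by
    show ContinuousAt ((fun ε : ℂ => (1 - ε * t)⁻¹) • H) 0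
    apply ContinuousAt.smul
    · apply ContinuousAt.inv₀
      · fun_prop
      · simp
    · apply Continuous.continuousAt
      apply continuous_matrix
      intro i j
      fin_cases i <;> fin_cases j <;>
        simp [hH, Matrix.vecHead, Matrix.vecTail] <;> fun_prop
  have hG0 : G 0 = B0m q a0 a1 a2 + t • B1m q a0 a1 a2 a3 := by
    ext i j
    fin_cases i <;> fin_cases j <;>
      simp [hG, hH, B0m, B1m, Matrix.vecHead, Matrix.vecTail] <;> ring
  apply Tendsto.congr' _ ((hG0 ▸ hGcont.tendsto).mono_left nhdsWithin_le_nhds)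
  filter_upwards [self_mem_nhdsWithin] with ε hε
  have hε : ε ≠ 0 := hε
  have hc : -(ε * (1 - q)) ≠ 0 := by simp [hε, hq']
  have hinv : (Matrix.diagonal ![1, -(ε * (1 - q)), -(ε * (1 - q))])⁻¹ =
      Matrix.diagonal ![1, (-(ε * (1 - q)))⁻¹, (-(ε * (1 - q)))⁻¹] := by
    apply Matrix.inv_eq_right_inv
    rw [Matrix.diagonal_mul_diagonal]
    ext i j
    rw [Matrix.diagonal_apply, Matrix.one_apply]
    fin_cases i <;> fin_cases j <;>
      simp [Matrix.vecHead, Matrix.vecTail, mul_inv_cancel₀ hc] <;> field_simp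
  rw [hinv]
  by_cases h1 : (1 : ℂ) - ε * t = 0
  · ext i j
    fin_cases i <;> fin_cases j <;>
      simp [hG, hH, h1, Matrix.mul_diagonal, Matrix.diagonal_mul,
        Matrix.vecHead, Matrix.vecTail]
  · ext i j
    fin_cases i <;> fin_cases j <;>
      · simp only [hG, hH, Matrix.mul_diagonal, Matrix.diagonal_mul, Matrix.smul_apply,
          Matrix.add_apply, A0m, A1m, Matrix.cons_val', Matrix.cons_val_zero,
          Matrix.cons_val_one, Matrix.head_cons, Matrix.head_fin_const, Matrix.empty_val',
          Matrix.cons_val_fin_one, Matrix.of_apply, Matrix.vecHead, Matrix.vecTail,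
          smul_eq_mul, Function.comp_apply, Fin.isValue, Fin.zero_eta, Fin.mk_one,
          Fin.reduceFinMk, Matrix.cons_val]
        field_simp
        ring
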